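/- Let A = (Q, E, s, F) be a Wheeler r-GNFA, let ≤ be a Wheeler order on A, and let α ∈ Σ* with α ≠ ε. For 0 < k < min{r+1, |α|}, let f_k = out(Q[1, |G^≺(p(α, |α|−k))|], s(α, k)) and g_k = out(Q[1, |G^≺_⊣(p(α, |α|−k))|], s(α, k)). Let j° be the smallest integer 0 ≤ j ≤ |Q| such that in(Q[1, j], s(α, k)) ≥ g_k for every 0 < k < min{r+1, |α|} with g_k > f_k. If j° ≥ 1, then Q[j°] ∈ G_⊣(α). -/

import Mathlib

/-- Strict co-lexicographic order: `α ≺ β` iff `α.reverse` is lexicographically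
smaller than `β.reverse`. The empty string is the minimum. -/
def ColexLt {σ : Type*} [LinearOrder σ] (α β : List σ) : Prop :=
  List.Lex (· < ·) α.reverse β.reverse

/-- Non-strict co-lexicographic order `α ≼ β`. -/
def ColexLe {σ : Type*} [LinearOrder σ] (α β : List σ) : Prop :=
  ColexLt α β ∨ α = β

/-- `α` is a strict suffix of `β`. -/
def IsStrictSuffix {σ : Type*} (α β : List σ) : Prop :=
  α <:+ β ∧ α ≠ β

/-- `p(α, k)`: the prefix of `α` of length `k`. -/
def pref {σ : Type*} (α : List σ) (k : ℕ) : List σ := α.take k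

/-- `s(α, k)`: the suffix of `α` of length `k`. -/
def suff {σ : Type*} (α : List σ) (k : ℕ) : List σ := α.drop (α.length - k)

/-- The 1-based rank of a state in a finite linear order: `rankQ u = i` means
`u = Q[i]` in the enumeration `Q[1] < Q[2] < ⋯ < Q[|Q|]`. -/
noncomputable def rankQ {Q : Type*} [Fintype Q] [LinearOrder Q] (u : Q) : ℕ :=
  {v : Q | v ≤ u}.ncard

/-- `Q[i, j] = {Q[i], …, Q[j]}` (empty if `i > j`). -/
def Qiv (Q : Type*) [Fintype Q] [LinearOrder Q] (i j : ℕ) : Set Q :=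
  {u | i ≤ rankQ u ∧ rankQ u ≤ j}

/-- A generalized nondeterministic finite automaton: a finite set of
string-labeled edges `E ⊆ Q × Q × Σ*`, an initial state `s`, final states `F`. -/
structure GNFA (σ Q : Type*) where
  E : Finset (Q × Q × List σ)
  s : Q
  F : Finset Q

namespace GNFA

variable {σ Q : Type*}

/-- `I A u β` means `β ∈ I_u`: `β` is obtained by concatenating the edge labels
along some path from `s` to `u` (in particular `ε ∈ I_s`). -/
inductive I (A : GNFA σ Q) : Q → List σ → Prop
  | base : I A A.s []
  | step {u v : Q} {α ρ : List σ} : I A u α → (u, v, ρ) ∈ A.E → I A v (α ++ ρ)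

/-- Reachability along edges. -/
def Reach (A : GNFA σ Q) : Q → Q → Prop :=
  Relation.ReflTransGen (fun x y => ∃ ρ, (x, y, ρ) ∈ A.E)

/-- Every state is reachable from the initial state and is co-reachable
(final or allows reaching a final state). -/
def Standard (A : GNFA σ Q) : Prop :=
  (∀ u, A.Reach A.s u) ∧ ∀ u, ∃ f ∈ A.F, A.Reach u f

/-- An ε-walk from `u` to `v`: a (possibly empty) sequence of ε-labeled edges. -/
def EpsWalk (A : GNFA σ Q) : Q → Q → Prop :=
  Relation.ReflTransGen (fun x y => (x, y, ([] : List σ)) ∈ A.E)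

/-- An `r`-GNFA: all edge labels have length at most `r`. -/
def Bounded (A : GNFA σ Q) (r : ℕ) : Prop := ∀ e ∈ A.E, e.2.2.length ≤ r

/-- A GNFA without ε-transitions: every edge label is nonempty. -/
def NoEps (A : GNFA σ Q) : Prop := ∀ e ∈ A.E, e.2.2 ≠ []

/-- `λ(u)`: the set of strings labeling some edge entering `u`. -/
def lab (A : GNFA σ Q) (u : Q) : Set (List σ) := {ρ | ∃ u', (u', u, ρ) ∈ A.E}

/-- `G_⊣(α)`: states `u` such that some `β ∈ I_u` has `α` as a suffix. -/
def Gsuf (A : GNFA σ Q) (α : List σ) : Set Q := {u | ∃ β, I A u β ∧ α <:+ β}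

/-- `G*(α)`: states reached by an edge whose label has `α` as a suffix. -/
def Gstar (A : GNFA σ Q) (α : List σ) : Set Q := {u | ∃ ρ ∈ A.lab u, α <:+ ρ}

section Colex
variable [LinearOrder σ]

/-- The preorder `u ≼_A v`. -/
def Preceq (A : GNFA σ Q) (u v : Q) : Prop :=
  ∀ α β, I A u α → I A v β →
    ¬((I A u α ∧ I A v α) ∧ (I A u β ∧ I A v β)) → ColexLt α β

/-- `G^≺(α)`: states `u` such that every `β ∈ I_u` satisfies `β ≺ α`. -/
def Gprec (A : GNFA σ Q) (α : List σ) : Set Q := {u | ∀ β, I A u β → ColexLt β α}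

/-- `G^≺_⊣(α) = G^≺(α) ∪ G_⊣(α)`. -/
def GprecSuf (A : GNFA σ Q) (α : List σ) : Set Q := A.Gprec α ∪ A.Gsuf α

/-- The linear order on `Q` is a Wheeler order on `A` (Axioms 1–4). -/
def IsWheeler [LinearOrder Q] (A : GNFA σ Q) : Prop :=
  (∀ u v : Q, u ≤ v → A.Preceq u v) ∧
  (∀ u : Q, A.s ≤ u) ∧
  (∀ u' u v' v : Q, ∀ ρ ρ' : List σ, (u', u, ρ) ∈ A.E → (v', v, ρ') ∈ A.E →
      u < v → ¬IsStrictSuffix ρ' ρ → ColexLe ρ ρ') ∧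
  (∀ u' u v' v : Q, ∀ ρ : List σ, (u', u, ρ) ∈ A.E → (v', v, ρ) ∈ A.E →
      u < v → u' ≤ v')

end Colex

section Indexed
variable [Fintype Q] [LinearOrder Q]

/-- `out(Q[1, m], ρ)`: number of edges labeled `ρ` leaving states in `Q[1, m]`. -/
noncomputable def outC (A : GNFA σ Q) (m : ℕ) (ρ : List σ) : ℕ :=
  {e : Q × Q × List σ | e ∈ A.E ∧ rankQ e.1 ≤ m ∧ e.2.2 = ρ}.ncard

/-- `in(Q[1, m], ρ)`: number of edges labeled `ρ` entering states in `Q[1, m]`. -/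
noncomputable def inC (A : GNFA σ Q) (m : ℕ) (ρ : List σ) : ℕ :=
  {e : Q × Q × List σ | e ∈ A.E ∧ rankQ e.2.1 ≤ m ∧ e.2.2 = ρ}.ncard

/-- `A_max[i]`: the largest `j` such that there is an ε-walk from `Q[j]` to `Q[i]`. -/
noncomputable def Amax (A : GNFA σ Q) (i : ℕ) : ℕ :=
  sSup {j | ∃ u v : Q, rankQ u = i ∧ rankQ v = j ∧ A.EpsWalk v u}

/-- `A_min[i]`: the smallest `j` such that there is an ε-walk from `Q[j]` to `Q[i]`. -/
noncomputable def Amin (A : GNFA σ Q) (i : ℕ) : ℕ :=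
  sInf {j | ∃ u v : Q, rankQ u = i ∧ rankQ v = j ∧ A.EpsWalk v u}

variable [LinearOrder σ]

/-- `f_k = out(Q[1, |G^≺(p(α, |α|−k))|], s(α, k))`. -/
noncomputable def fk (A : GNFA σ Q) (α : List σ) (k : ℕ) : ℕ :=
  A.outC ((A.Gprec (pref α (α.length - k))).ncard) (suff α k)

/-- `g_k = out(Q[1, |G^≺_⊣(p(α, |α|−k))|], s(α, k))`. -/
noncomputable def gk (A : GNFA σ Q) (α : List σ) (k : ℕ) : ℕ :=
  A.outC ((A.GprecSuf (pref α (α.length - k))).ncard) (suff α k)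

/-- The property defining `j*` in Lemmas 2 and 4 (largest `j` satisfying it):
(i) `in(Q[1, j], s(α, k)) ≤ f_k` for every `0 < k < min{r+1, |α|}`; and
(ii) `ρ ≺ α` for every `ρ ∈ Σ^k ∩ λ(Q[h])`, every `1 ≤ h ≤ j`, every `0 < k < r+1`. -/
def Jcond (A : GNFA σ Q) (r : ℕ) (α : List σ) (j : ℕ) : Prop :=
  (∀ k, 0 < k → k < min (r + 1) α.length → A.inC j (suff α k) ≤ A.fk α k) ∧
  (∀ k, 0 < k → k < r + 1 → ∀ h, 1 ≤ h → h ≤ j → ∀ u : Q, rankQ u = h →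
      ∀ ρ : List σ, ρ.length = k → ρ ∈ A.lab u → ColexLt ρ α)

/-- The property defining `i*` (largest `i ≤ |Q|` satisfying it):
if `i ≥ 1` then `Q[i] ∈ G*(α)`. -/
def Icond (A : GNFA σ Q) (α : List σ) (i : ℕ) : Prop :=
  1 ≤ i → ∃ u : Q, rankQ u = i ∧ u ∈ A.Gstar α

/-- The property defining `j°` (smallest `j ≤ |Q|` satisfying it):
`in(Q[1, j], s(α, k)) ≥ g_k` for every `0 < k < min{r+1, |α|}` with `g_k > f_k`. -/
def Jcond2 (A : GNFA σ Q) (r : ℕ) (α : List σ) (j : ℕ) : Prop :=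
  ∀ k, 0 < k → k < min (r + 1) α.length → A.fk α k < A.gk α k →
    A.gk α k ≤ A.inC j (suff α k)

end Indexed

end GNFA

section AuxLemmas

variable {σ Q : Type*}

/-- Key lemma about `List.Lex`: if `b < g`, `q` is a prefix of `g` but not of `b`,
then `b < q`. -/
lemma lex_lt_of_prefix [LinearOrder σ] :
    ∀ (q b g : List σ), List.Lex (· < ·) b g → q <+: g → ¬ q <+: b →
      List.Lex (· < ·) b q
  | [], _, _, _, _, hn => absurd (List.nil_prefix) hn
  | _ :: _, [], _, _, _, _ => List.Lex.nil
  | x :: q', y :: b', g, hlex, hp, hn => by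
      obtain ⟨t, rfl⟩ := hp
      cases hlex with
      | rel h => exact List.Lex.rel h
      | cons h =>
          refine List.Lex.cons (lex_lt_of_prefix q' b' (q' ++ t) h ⟨t, rfl⟩ ?_)
          rintro ⟨t2, rfl⟩
          exact hn ⟨t2, rfl⟩

lemma colexLt_trans [LinearOrder σ] {a b c : List σ}
    (h1 : ColexLt a b) (h2 : ColexLt b c) : ColexLt a c := by
  unfold ColexLt at h1 h2 ⊢
  exact List.lex_trans (fun h h' => lt_trans h h') h1 h2

lemma colexLt_of_suffix [LinearOrder σ] {b g p : List σ}
    (h : ColexLt b g) (hs : p <:+ g) (hn : ¬ p <:+ b) : ColexLt b p :=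
  lex_lt_of_prefix p.reverse b.reverse g.reverse h
    (List.reverse_prefix.mpr hs) (fun hp => hn (List.reverse_prefix.mp hp))

variable [Fintype Q] [LinearOrder Q]

lemma rankQ_le_card (u : Q) : rankQ u ≤ Fintype.card Q := by
  have h : rankQ u ≤ (Set.univ : Set Q).ncard :=
    Set.ncard_le_ncard (Set.subset_univ _) Set.finite_univ
  simpa [Set.ncard_univ, Nat.card_eq_fintype_card] using h

lemma rankQ_lt_rankQ {u v : Q} (h : u < v) : rankQ u < rankQ v := by
  apply Set.ncard_lt_ncard _ (Set.toFinite _)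
  constructor
  · intro x hx; exact le_trans hx h.le
  · intro hsub
    exact absurd (hsub (le_refl v)) (not_le.mpr h)

lemma rankQ_le_rankQ_iff {u v : Q} : rankQ u ≤ rankQ v ↔ u ≤ v := by
  constructor
  · intro h
    by_contra hc
    exact absurd h (not_le.mpr (rankQ_lt_rankQ (not_le.mp hc)))
  · intro h
    rcases eq_or_lt_of_le h with rfl | h
    · exact le_refl _
    · exact (rankQ_lt_rankQ h).le

lemma rankQ_inj {u v : Q} (h : rankQ u = rankQ v) : u = v :=
  le_antisymm (rankQ_le_rankQ_iff.mp h.le) (rankQ_le_rankQ_iff.mp h.ge)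

/-- Characterization of downward closed sets by rank. -/
lemma mem_iff_rankQ_le {D : Set Q} (hD : ∀ u v : Q, u ≤ v → v ∈ D → u ∈ D) (u : Q) :
    u ∈ D ↔ rankQ u ≤ D.ncard := by
  constructor
  · intro hu
    exact Set.ncard_le_ncard (fun x hx => hD x u hx hu) (Set.toFinite _)
  · intro h
    by_contra hu
    have hsub : D ⊆ {x | x < u} := fun d hd =>
      lt_of_not_ge (fun hle => hu (hD u d hle hd))
    have h1 : D.ncard ≤ {x : Q | x < u}.ncard :=
      Set.ncard_le_ncard hsub (Set.toFinite _)
    have h2 : {x : Q | x < u}.ncard < rankQ u := by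
      apply Set.ncard_lt_ncard _ (Set.toFinite _)
      constructor
      · intro x hx; exact le_of_lt hx
      · intro hsub2
        exact lt_irrefl u (hsub2 (le_refl u))
    omega

lemma key_aux {a b a' b' C : ℕ} (hb : b < C) (h : a' * C + b' ≤ a * C + b) :
    a' ≤ a := by
  by_contra hc
  push_neg at hc
  have h2 : (a + 1) * C ≤ a' * C := Nat.mul_le_mul_right C hc
  have e1 : (a + 1) * C = a * C + C := Nat.succ_mul a C
  omega

/-- `X` is downward closed in `S` w.r.t. the key `key`. -/
def DownIn {E : Type*} (S : Set E) (key : E → ℕ) (X : Set E) : Prop :=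
  ∀ e ∈ S, ∀ e' ∈ S, key e' ≤ key e → e ∈ X → e' ∈ X

lemma downsets_comparable {E : Type*} {S X Y : Set E} {key : E → ℕ}
    (hX : X ⊆ S) (hY : Y ⊆ S)
    (hXd : DownIn S key X) (hYd : DownIn S key Y) :
    X ⊆ Y ∨ Y ⊆ X := by
  by_cases h : X ⊆ Y
  · exact Or.inl h
  · right
    obtain ⟨x, hxX, hxY⟩ := Set.not_subset.mp h
    intro y hyY
    rcases le_total (key y) (key x) with hk | hk
    · exact hXd x (hX hxX) y (hY hyY) hk hxX
    · exact absurd (hYd y (hY hyY) x (hX hxX) hk hyY) hxY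

lemma counting {E : Type*} {S X1 X2 T1 T2 : Set E} {key : E → ℕ}
    (hS : S.Finite)
    (hX1 : X1 ⊆ S) (hX2 : X2 ⊆ S) (hT1 : T1 ⊆ S) (hT2 : T2 ⊆ S)
    (dX1 : DownIn S key X1) (dX2 : DownIn S key X2)
    (dT1 : DownIn S key T1) (dT2 : DownIn S key T2)
    (c1 : X1.ncard < X2.ncard) (c2 : T1.ncard < X2.ncard)
    (c3 : X2.ncard ≤ T2.ncard) :
    ∃ e ∈ X2, e ∉ X1 ∧ e ∉ T1 ∧ e ∈ T2 := by
  have hfin : ∀ {W : Set E}, W ⊆ S → W.Finite := fun h => hS.subset h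
  have hX2T2 : X2 ⊆ T2 := by
    rcases downsets_comparable hX2 hT2 dX2 dT2 with h | h
    · exact h
    · have := Set.eq_of_subset_of_ncard_le h c3 (hfin hX2)
      rw [this]
  rcases downsets_comparable hX1 hT1 dX1 dT1 with h | h
  · have hns : ¬ X2 ⊆ T1 := fun hsub =>
      absurd (Set.ncard_le_ncard hsub (hfin hT1)) (not_le.mpr c2)
    obtain ⟨e, he2, heT1⟩ := Set.not_subset.mp hns
    exact ⟨e, he2, fun hc => heT1 (h hc), heT1, hX2T2 he2⟩
  · have hns : ¬ X2 ⊆ X1 := fun hsub =>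
      absurd (Set.ncard_le_ncard hsub (hfin hX1)) (not_le.mpr c1)
    obtain ⟨e, he2, heX1⟩ := Set.not_subset.mp hns
    exact ⟨e, he2, heX1, fun hc => heX1 (h hc), hX2T2 he2⟩

end AuxLemmas

namespace GNFA

variable {σ Q : Type*}

lemma I_nonempty (A : GNFA σ Q) (hA : A.Standard) (v : Q) : ∃ γ, A.I v γ := by
  have h := hA.1 v
  induction h with
  | refl => exact ⟨[], GNFA.I.base⟩
  | tail _ e ih =>
      obtain ⟨ρ, he⟩ := e
      obtain ⟨γ, hγ⟩ := ih
      exact ⟨γ ++ ρ, GNFA.I.step hγ he⟩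

variable [LinearOrder σ] [LinearOrder Q]

lemma gprec_down (A : GNFA σ Q) (hA : A.Standard) (hW : A.IsWheeler) (p : List σ) :
    ∀ u v : Q, u ≤ v → v ∈ A.Gprec p → u ∈ A.Gprec p := by
  intro u v huv hv β hβ
  by_cases hvβ : A.I v β
  · exact hv β hvβ
  · obtain ⟨γ, hγ⟩ := I_nonempty A hA v
    have hlex : ColexLt β γ := hW.1 u v huv β γ hβ hγ (fun h => hvβ h.1.2)
    exact colexLt_trans hlex (hv γ hγ)

lemma gprecSuf_down (A : GNFA σ Q) (hA : A.Standard) (hW : A.IsWheeler) (p : List σ) :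
    ∀ u v : Q, u ≤ v → v ∈ A.GprecSuf p → u ∈ A.GprecSuf p := by
  intro u v huv hv
  cases hv with
  | inl h => exact Or.inl (gprec_down A hA hW p u v huv h)
  | inr h =>
      by_cases hu : u ∈ A.Gsuf p
      · exact Or.inr hu
      · left
        obtain ⟨γ, hγ, hps⟩ := h
        intro β hβ
        have hne : ¬ p <:+ β := fun hc => hu ⟨β, hβ, hc⟩
        have hlex : ColexLt β γ :=
          hW.1 u v huv β γ hβ hγ (fun hcc => hu ⟨γ, hcc.2.1, hps⟩)
        exact colexLt_of_suffix hlex hps hne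

variable [Fintype Q]

/-- The central counting argument: if `out(Q[1,mf],ρ) < out(Q[1,mg],ρ)`,
`in(Q[1,jo-1],ρ) < out(Q[1,mg],ρ)` and `out(Q[1,mg],ρ) ≤ in(Q[1,jo],ρ)`, then
there is a `ρ`-labeled edge from a source of rank in `(mf, mg]` into `Q[jo]`. -/
lemma exists_edge (A : GNFA σ Q) (hW : A.IsWheeler) (ρ : List σ) (mf mg jo : ℕ)
    (h1 : A.outC mf ρ < A.outC mg ρ)
    (h2 : A.inC (jo - 1) ρ < A.outC mg ρ)
    (h3 : A.outC mg ρ ≤ A.inC jo ρ) (hjo : 1 ≤ jo) :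
    ∃ e ∈ A.E, e.2.2 = ρ ∧ mf < rankQ e.1 ∧ rankQ e.1 ≤ mg ∧ rankQ e.2.1 = jo := by
  set C := Fintype.card Q + 1 with hC
  have hrankC : ∀ w : Q, rankQ w < C := fun w => by
    have := rankQ_le_card w; omega
  set key : Q × Q × List σ → ℕ := fun e => rankQ e.2.1 * C + rankQ e.1 with hkey
  have hkeyT : ∀ e e' : Q × Q × List σ, key e' ≤ key e →
      rankQ e'.2.1 ≤ rankQ e.2.1 := by
    intro e e' h
    exact key_aux (hrankC e.1) h
  have hXsub : ∀ c : ℕ, {e : Q × Q × List σ | e ∈ A.E ∧ rankQ e.1 ≤ c ∧ e.2.2 = ρ}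
      ⊆ {e : Q × Q × List σ | e ∈ A.E ∧ e.2.2 = ρ} :=
    fun c e he => ⟨he.1, he.2.2⟩
  have hTsub : ∀ j : ℕ, {e : Q × Q × List σ | e ∈ A.E ∧ rankQ e.2.1 ≤ j ∧ e.2.2 = ρ}
      ⊆ {e : Q × Q × List σ | e ∈ A.E ∧ e.2.2 = ρ} :=
    fun j e he => ⟨he.1, he.2.2⟩
  have hSfin : {e : Q × Q × List σ | e ∈ A.E ∧ e.2.2 = ρ}.Finite :=
    A.E.finite_toSet.subset (fun e he => he.1)
  have hXdown : ∀ c : ℕ, DownIn {e : Q × Q × List σ | e ∈ A.E ∧ e.2.2 = ρ} key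
      {e : Q × Q × List σ | e ∈ A.E ∧ rankQ e.1 ≤ c ∧ e.2.2 = ρ} := by
    rintro c ⟨a2, b2, l2⟩ ⟨he2, hl2⟩ ⟨a, b, l⟩ ⟨he, hl⟩ hke hex
    refine ⟨he, ?_, hl⟩
    have hll2 : l = l2 := hl.trans hl2.symm
    rw [← hll2] at he2
    have htle : rankQ b ≤ rankQ b2 := hkeyT _ _ hke
    rcases lt_or_eq_of_le htle with hlt | heq
    · have hst : b < b2 := by
        by_contra hc
        exact absurd (rankQ_le_rankQ_iff.mpr (not_lt.mp hc)) (not_le.mpr hlt)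
      have hle : a ≤ a2 := hW.2.2.2 a b a2 b2 l he he2 hst
      exact le_trans (rankQ_le_rankQ_iff.mpr hle) hex.2.1
    · have hke' : rankQ b * C + rankQ a ≤ rankQ b2 * C + rankQ a2 := hke
      rw [heq] at hke'
      have : rankQ a ≤ rankQ a2 := by omega
      exact le_trans this hex.2.1
  have hTdown : ∀ j : ℕ, DownIn {e : Q × Q × List σ | e ∈ A.E ∧ e.2.2 = ρ} key
      {e : Q × Q × List σ | e ∈ A.E ∧ rankQ e.2.1 ≤ j ∧ e.2.2 = ρ} := by
    rintro j e he e' he' hke hex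
    exact ⟨he'.1, le_trans (hkeyT _ _ hke) hex.2.1, he'.2⟩
  have h1' : {e : Q × Q × List σ | e ∈ A.E ∧ rankQ e.1 ≤ mf ∧ e.2.2 = ρ}.ncard <
      {e : Q × Q × List σ | e ∈ A.E ∧ rankQ e.1 ≤ mg ∧ e.2.2 = ρ}.ncard := h1
  have h2' : {e : Q × Q × List σ | e ∈ A.E ∧ rankQ e.2.1 ≤ jo - 1 ∧ e.2.2 = ρ}.ncard <
      {e : Q × Q × List σ | e ∈ A.E ∧ rankQ e.1 ≤ mg ∧ e.2.2 = ρ}.ncard := h2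
  have h3' : {e : Q × Q × List σ | e ∈ A.E ∧ rankQ e.1 ≤ mg ∧ e.2.2 = ρ}.ncard ≤
      {e : Q × Q × List σ | e ∈ A.E ∧ rankQ e.2.1 ≤ jo ∧ e.2.2 = ρ}.ncard := h3
  obtain ⟨e, he2, heX1, heT1, heT2⟩ :=
    counting hSfin (hXsub mf) (hXsub mg) (hTsub (jo - 1)) (hTsub jo)
      (hXdown mf) (hXdown mg) (hTdown (jo - 1)) (hTdown jo) h1' h2' h3'
  refine ⟨e, he2.1, he2.2.2, ?_, he2.2.1, ?_⟩
  · by_contra hc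
    exact heX1 ⟨he2.1, not_lt.mp hc, he2.2.2⟩
  · have hle : rankQ e.2.1 ≤ jo := heT2.2.1
    have hgt : ¬ rankQ e.2.1 ≤ jo - 1 := fun hc => heT1 ⟨he2.1, hc, he2.2.2⟩
    omega

end GNFA

/-- Let `A` be a Wheeler `r`-GNFA with Wheeler order `≤` and
`α ≠ ε`. Let `j°` be the smallest `0 ≤ j ≤ |Q|` such that
`in(Q[1,j], s(α,k)) ≥ g_k` for every `0 < k < min{r+1,|α|}` with `g_k > f_k`.
If `j° ≥ 1`, then `Q[j°] ∈ G_⊣(α)`. -/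
theorem jo_mem_gsuf {σ Q : Type*} [Fintype σ] [LinearOrder σ]
    [Fintype Q] [LinearOrder Q] (A : GNFA σ Q)
    (hA : A.Standard) (hW : A.IsWheeler) (r : ℕ) (hr : A.Bounded r)
    (α : List σ) (hα : α ≠ [])
    (jo : ℕ) (hjo_le : jo ≤ Fintype.card Q) (hjo : A.Jcond2 r α jo)
    (hjo_min : ∀ j ≤ Fintype.card Q, A.Jcond2 r α j → jo ≤ j)
    (h1 : 1 ≤ jo) :
    ∀ u : Q, rankQ u = jo → u ∈ A.Gsuf α := by
  intro u hu
  have hfail : ¬ A.Jcond2 r α (jo - 1) := by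
    intro h
    have := hjo_min (jo - 1) (by omega) h
    omega
  rw [GNFA.Jcond2] at hfail
  push_neg at hfail
  obtain ⟨k, hk0, hklt, hfg, hin⟩ := hfail
  have hinjo : A.gk α k ≤ A.inC jo (suff α k) := hjo k hk0 hklt hfg
  obtain ⟨e, heE, heρ, hmf, hmg, hjoe⟩ :=
    GNFA.exists_edge A hW (suff α k)
      ((A.Gprec (pref α (α.length - k))).ncard)
      ((A.GprecSuf (pref α (α.length - k))).ncard)
      jo hfg hin hinjo h1
  obtain ⟨v', v, l⟩ := e
  simp only at heρ hmf hmg hjoe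
  subst heρ
  have hvu : v = u := rankQ_inj (by rw [hjoe, hu])
  subst hvu
  have hv'GS : v' ∈ A.GprecSuf (pref α (α.length - k)) :=
    (mem_iff_rankQ_le (GNFA.gprecSuf_down A hA hW _) v').mpr hmg
  have hv'nG : v' ∉ A.Gprec (pref α (α.length - k)) := by
    intro hc
    exact absurd ((mem_iff_rankQ_le (GNFA.gprec_down A hA hW _) v').mp hc)
      (not_le.mpr hmf)
  have hv'suf : v' ∈ A.Gsuf (pref α (α.length - k)) := by
    cases hv'GS with
    | inl h => exact absurd h hv'nG
    | inr h => exact h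
  obtain ⟨β, hβI, hβs⟩ := hv'suf
  refine ⟨β ++ suff α k, GNFA.I.step hβI heE, ?_⟩
  obtain ⟨β0, rfl⟩ := hβs
  refine ⟨β0, ?_⟩
  rw [List.append_assoc]
  congr 1
  exact (List.take_append_drop (α.length - k) α).symm
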